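/- The submodule of elements killed by a power of y recovers the pushforward: Let A be a ℚ-algebra, M a right module over A[t]⟨∂_t⟩, and N = Δ_! M = ⊕_{n≥0} M∂_y^n with its right A[v,y]⟨∂_v',∂_y⟩-action as above. Then (i) the submodule of N annihilated by y is exactly M∂_y^0 ≅ M (Δ^! Δ_! M ≅ M), and (ii) for every n ≥ 0, the submodule of N annihilated by y^{n+1} is exactly ⊕_{k=0}^{n} M∂_y^k. -/

import Mathlib

namespace Stmt13

variable (A : Type*) [CommRing A] [Algebra ℚ A]
variable (M : Type*) [AddCommGroup M] [Module A M]
variable (T Dt : Module.End A M)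

/-- `N = Δ_! M = ⊕_{n≥0} M·∂_y^n` as `ℕ →₀ M`. -/
abbrev N := ℕ →₀ M

/-- Right action of `y`: `(m ∂_y^n)·y = -n · m ∂_y^{n-1}`. -/
noncomputable def opY : Module.End A (N M) :=
  Finsupp.lsum A fun n => Finsupp.lsingle (n - 1) ∘ₗ ((-(n : A)) • LinearMap.id)

lemma opY_single (n : ℕ) (m : M) :
    opY A M (Finsupp.single n m) = Finsupp.single (n - 1) ((-(n : A)) • m) := by
  simp [opY]

lemma isUnit_neg_natCast (n : ℕ) (hn : n ≠ 0) : IsUnit (-(n : A)) := by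
  have h : (-(n : A)) = algebraMap ℚ A (-(n : ℚ)) := by push_cast; ring
  have h2 : (-(n : ℚ)) ≠ 0 := neg_ne_zero.2 (Nat.cast_ne_zero.2 hn)
  rw [h]
  exact IsUnit.map _ (isUnit_iff_ne_zero.2 h2)

lemma opY_apply (f : N M) (j : ℕ) :
    opY A M f j = (-(((j + 1 : ℕ)) : A)) • f (j + 1) := by
  induction f using Finsupp.induction_linear with
  | zero => simp
  | add f g hf hg => simp [map_add, Finsupp.add_apply, hf, hg, smul_add]
  | single n m =>
    rw [opY_single]
    rcases n with _ | n'
    · simp [Finsupp.single_apply]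
    · simp only [Nat.succ_sub_one, Finsupp.single_apply]
      by_cases h : n' = j
      · subst h; simp
      · rw [if_neg h, if_neg (by omega), smul_zero]

lemma opY_pow_apply (p : ℕ) : ∃ c : ℕ → A, (∀ j, IsUnit (c j)) ∧
    ∀ (f : N M) (j : ℕ), ((opY A M) ^ p) f j = c j • f (j + p) := by
  induction p with
  | zero => exact ⟨fun _ => 1, fun _ => isUnit_one, fun f j => by simp⟩
  | succ p ih =>
    obtain ⟨c, hc, h⟩ := ih
    refine ⟨fun j => c j * (-((j + p + 1 : ℕ) : A)),
      fun j => (hc j).mul (isUnit_neg_natCast A (j + p + 1) (by omega)),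
      fun f j => ?_⟩
    have : ((opY A M) ^ (p + 1)) f = ((opY A M) ^ p) (opY A M f) := by
      rw [pow_succ]; rfl
    rw [this, h, opY_apply, smul_smul]
    congr 1 <;> omega

lemma mem_ker_pow (p : ℕ) (f : N M) :
    f ∈ LinearMap.ker ((opY A M) ^ p) ↔ ∀ n, p ≤ n → f n = 0 := by
  obtain ⟨c, hc, h⟩ := opY_pow_apply A M p
  constructor
  · intro hf n hn
    have h0 : ((opY A M) ^ p) f (n - p) = 0 := by
      rw [LinearMap.mem_ker.1 hf]; rfl
    rw [h, (by omega : n - p + p = n)] at h0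
    obtain ⟨u, hu⟩ := hc (n - p)
    rw [← hu] at h0
    simpa using h0
  · intro hf
    rw [LinearMap.mem_ker]
    ext j
    rw [h, hf (j + p) (by omega)]
    simp

/-- for a `ℚ`-algebra `A` and `N = Δ_! M` with the explicit right
action of `y`: (i) the submodule of `N` annihilated by `y` is exactly
`M∂_y^0 ≅ M` (so `Δ^! Δ_! M ≅ M`), and (ii) for every `k`, the submodule of `N`
annihilated by `y^{k+1}` is exactly `⊕_{j≤k} M∂_y^j`. -/
theorem stmt13 (hM : T ∘ₗ Dt - Dt ∘ₗ T = LinearMap.id) :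
    (LinearMap.ker (opY A M) = LinearMap.range (Finsupp.lsingle (M := M) (R := A) 0))
    ∧ (∀ k : ℕ, LinearMap.ker ((opY A M) ^ (k + 1)) =
        ⨆ j : Fin (k + 1),
          LinearMap.range (Finsupp.lsingle (M := M) (R := A) (j : ℕ))) := by
  have main : ∀ k : ℕ, LinearMap.ker ((opY A M) ^ (k + 1)) =
      ⨆ j : Fin (k + 1),
        LinearMap.range (Finsupp.lsingle (M := M) (R := A) (j : ℕ)) := by
    intro k
    apply le_antisymm
    · intro f hf
      rw [mem_ker_pow] at hf
      rw [← Finsupp.sum_single f, Finsupp.sum]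
      refine Submodule.sum_mem _ fun n hn => ?_
      have hle : n ≤ k := by
        by_contra hnk
        exact (Finsupp.mem_support_iff.1 hn) (hf n (by omega))
      exact Submodule.mem_iSup_of_mem (⟨n, by omega⟩ : Fin (k + 1)) ⟨f n, rfl⟩
    · refine iSup_le fun j => ?_
      rintro _ ⟨m, rfl⟩
      rw [LinearMap.mem_ker, ← LinearMap.mem_ker, mem_ker_pow A M]
      intro n hn
      simp only [Finsupp.lsingle_apply, Finsupp.single_apply]
      rw [if_neg (by have := j.isLt; omega : ¬ (j : ℕ) = n)]
  refine ⟨?_, main⟩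
  have h0 := main 0
  rw [pow_one] at h0
  rw [h0]
  exact le_antisymm (iSup_le fun j => by
      have : (j : ℕ) = 0 := by omega
      rw [this]) (le_iSup_of_le (0 : Fin 1) (by rfl))

end Stmt13
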